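/- arXiv:2003.05619 — 3 statements merged into one kernel-verified Lean document; each statement's English description precedes it below -/
import Mathlib

section
/- Let f ∈ L²(0,1) have Fourier expansion f(x) = Σ_{j∈ℤ} θ_j e^{2πijx} with θ₀ = 0, and let m be a positive integer. Then Σ_{l=0}^{m−1} (∫_{l/m}^{(l+1)/m} f(x) dx)² = m · Σ_{k∈ℤ} Σ_{j ≠ km, j≠0, j−km≠0} [θ_j · conj(θ_{j−km}) / (4π² j (j−km))] · (2 − 2cos(2πj/m)). -/
open Real MeasureTheory

noncomputable def Acoef (θ : ℤ → ℂ) (m : ℕ) (j : ℤ) : ℂ :=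
  θ j * (Complex.exp (2 * π * Complex.I * j / m) - 1) / (2 * π * Complex.I * j)

lemma normA_le (θ : ℤ → ℂ) (m : ℕ) (j : ℤ) : ‖Acoef θ m j‖ ≤ ‖θ j‖ := by
  rcases eq_or_ne j 0 with rfl | hj
  · simp [Acoef]
  · have hj1 : (1:ℝ) ≤ |(j:ℝ)| := by
      rw [← Int.cast_abs]
      exact_mod_cast Int.one_le_abs hj
    have hne : ‖Complex.exp (2 * π * Complex.I * j / m) - 1‖ ≤ 2 := by
      calc ‖Complex.exp (2 * π * Complex.I * j / m) - 1‖
          ≤ ‖Complex.exp (2 * π * Complex.I * j / m)‖ + ‖(1:ℂ)‖ := norm_sub_le _ _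
        _ ≤ 2 := by
            rw [Complex.norm_exp]
            have : (2 * ↑π * Complex.I * ↑j / ↑m).re = 0 := by
              simp [Complex.div_re, Complex.mul_re, Complex.mul_im]
            rw [this]
            norm_num
    have hden : ‖(2 * ↑π * Complex.I * (j:ℂ))‖ = 2 * π * |(j:ℝ)| := by
      simp [norm_mul, abs_of_pos pi_pos,
        Int.cast_abs]
    have h2 : (2:ℝ) ≤ 2 * π * |(j:ℝ)| := by nlinarith [pi_gt_three]
    calc ‖Acoef θ m j‖ = ‖θ j‖ * ‖Complex.exp (2 * π * Complex.I * j / m) - 1‖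
          / (2 * π * |(j:ℝ)|) := by rw [Acoef, norm_div, norm_mul, hden]
      _ ≤ ‖θ j‖ * 2 / 2 := by
          apply div_le_div₀ (by positivity) (by nlinarith [norm_nonneg (θ j)]) (by norm_num) h2
      _ = ‖θ j‖ := by ring

lemma norm_term (z : ℂ) (t : ℝ) : ‖z * Complex.exp (2 * π * Complex.I * t)‖ = ‖z‖ := by
  rw [norm_mul, Complex.norm_exp]
  have : (2 * ↑π * Complex.I * ↑t).re = 0 := by
    simp [Complex.mul_re, Complex.mul_im]
  rw [this]
  simp

lemma integral_term (θ : ℤ → ℂ) (hθ0 : θ 0 = 0) (m : ℕ) (hm : 1 ≤ m) (l : ℕ) (j : ℤ) :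
    (∫ x in ((l : ℝ) / m)..(((l : ℝ) + 1) / m), θ j * Complex.exp (2 * π * Complex.I * j * x))
      = Acoef θ m j * Complex.exp (2 * π * Complex.I * j * l / m) := by
  have hmC : (m:ℂ) ≠ 0 := Nat.cast_ne_zero.mpr (by omega)
  rcases eq_or_ne j 0 with rfl | hj
  · simp [hθ0, Acoef]
  · have hc : (2 * ↑π * Complex.I * (j:ℂ)) ≠ 0 := by
      simp [Real.pi_ne_zero, Complex.I_ne_zero, hj]
    rw [intervalIntegral.integral_const_mul]
    rw [integral_exp_mul_complex hc]
    rw [Acoef]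
    have e1 : 2 * ↑π * Complex.I * (j:ℂ) * ((((l:ℝ) + 1) / m : ℝ) : ℂ)
        = 2 * π * Complex.I * j * l / m + 2 * π * Complex.I * j / m := by
      push_cast
      field_simp
    have e2 : 2 * ↑π * Complex.I * (j:ℂ) * (((l:ℝ) / m : ℝ) : ℂ)
        = 2 * π * Complex.I * j * l / m := by
      push_cast
      field_simp
    rw [e1, e2, Complex.exp_add]
    field_simp

lemma norm_term' (z : ℂ) (j : ℤ) (x : ℝ) :
    ‖z * Complex.exp (2 * π * Complex.I * j * x)‖ = ‖z‖ := by
  have : (2 * ↑π * Complex.I * (j:ℂ) * (x:ℂ)) = 2 * ↑π * Complex.I * ((j * x : ℝ) : ℂ) := by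
    push_cast; ring
  rw [this, norm_term]

lemma norm_term'' (z : ℂ) (j : ℤ) (l m : ℕ) :
    ‖z * Complex.exp (2 * π * Complex.I * j * l / m)‖ = ‖z‖ := by
  have : (2 * ↑π * Complex.I * (j:ℂ) * (l:ℂ) / (m:ℂ))
      = 2 * ↑π * Complex.I * ((j * l / m : ℝ) : ℂ) := by
    push_cast; ring
  rw [this, norm_term]

lemma integral_f (θ : ℤ → ℂ) (hθ0 : θ 0 = 0) (hθ1 : Summable fun j => ‖θ j‖)
    (m : ℕ) (hm : 1 ≤ m) (f : ℝ → ℂ)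
    (hf : ∀ x : ℝ, f x = ∑' j : ℤ, θ j * Complex.exp (2 * π * Complex.I * j * x))
    (l : ℕ) :
    (∫ x in ((l : ℝ) / m)..(((l : ℝ) + 1) / m), f x)
      = ∑' j : ℤ, Acoef θ m j * Complex.exp (2 * π * Complex.I * j * l / m) := by
  have hm0 : (0:ℝ) < m := by positivity
  have huv : (l : ℝ) / m ≤ ((l : ℝ) + 1) / m := by
    gcongr
    linarith
  simp only [hf]
  rw [intervalIntegral.integral_of_le huv]
  rw [← integral_tsum_of_summable_integral_norm]
  · exact tsum_congr fun j => by
      rw [← intervalIntegral.integral_of_le huv, integral_term θ hθ0 m hm l j]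
  · intro j
    apply Continuous.integrableOn_Ioc
    fun_prop
  · have : ∀ j : ℤ, (∫ x in Set.Ioc ((l:ℝ)/m) (((l:ℝ)+1)/m),
        ‖θ j * Complex.exp (2 * π * Complex.I * j * x)‖)
        = ‖θ j‖ * (volume (Set.Ioc ((l:ℝ)/m) (((l:ℝ)+1)/m))).toReal := by
      intro j
      rw [setIntegral_congr_fun measurableSet_Ioc (g := fun _ => ‖θ j‖)
        (fun x _ => norm_term' (θ j) j x)]
      simp [mul_comm]
      left; rfl
    simp only [this]
    exact hθ1.mul_right _

lemma key_term (θ : ℤ → ℂ) (hθ0 : θ 0 = 0) (m : ℕ) (hm : 1 ≤ m) (k j : ℤ) :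
    Acoef θ m j * (starRingEnd ℂ) (Acoef θ m (j - k * m)) =
      if j ≠ 0 ∧ j ≠ k * m then
        θ j * (starRingEnd ℂ) (θ (j - k * m)) / (4 * π ^ 2 * j * (j - k * m))
          * (2 - 2 * Real.cos (2 * π * j / m))
      else 0 := by
  have hmC : (m:ℂ) ≠ 0 := Nat.cast_ne_zero.mpr (by omega)
  by_cases h0 : j = 0
  · simp [Acoef, h0, hθ0]
  by_cases hk : j = k * m
  · simp [Acoef, hk, hθ0]
  rw [if_pos ⟨h0, hk⟩]
  set t : ℝ := 2 * π * (j:ℝ) / m with ht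
  set c : ℂ := ((Real.cos t : ℝ) : ℂ) with hc
  set s : ℂ := ((Real.sin t : ℝ) : ℂ) with hs
  have hsc : s ^ 2 + c ^ 2 = 1 := by
    rw [hc, hs, ← Complex.ofReal_pow, ← Complex.ofReal_pow, ← Complex.ofReal_add,
      Real.sin_sq_add_cos_sq, Complex.ofReal_one]
  have hJ : (j:ℂ) ≠ 0 := Int.cast_ne_zero.mpr h0
  have hD : ((j - k * m : ℤ):ℂ) ≠ 0 := Int.cast_ne_zero.mpr (by omega)
  have hE : Complex.exp (2 * π * Complex.I * j / m) = c + s * Complex.I := by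
    rw [show (2 * ↑π * Complex.I * (j:ℂ) / (m:ℂ)) = ((t:ℝ):ℂ) * Complex.I by
      rw [ht]; push_cast; field_simp]
    rw [Complex.exp_mul_I, ← Complex.ofReal_cos, ← Complex.ofReal_sin]
  have hE' : Complex.exp (2 * π * Complex.I * ((j - k * m : ℤ):ℂ) / m) = c + s * Complex.I := by
    have h2 : (2 * ↑π * Complex.I * ((j - k * m : ℤ):ℂ) / (m:ℂ))
        = 2 * ↑π * Complex.I * (j:ℂ) / (m:ℂ) + (-k : ℤ) * (2 * ↑π * Complex.I) := by
      push_cast; field_simp; ring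
    rw [h2, Complex.exp_add, Complex.exp_int_mul_two_pi_mul_I, mul_one, hE]
  have hconj : (starRingEnd ℂ) (Acoef θ m (j - k * m))
      = (starRingEnd ℂ) (θ (j - k * m)) * ((c - s * Complex.I) - 1)
          / (-(2 * π * Complex.I * ((j - k * m : ℤ):ℂ))) := by
    rw [Acoef, hE']
    simp only [map_div₀, map_mul, map_sub, map_add, map_one, Complex.conj_I,
      Complex.conj_ofReal, map_intCast, map_ofNat, hc, hs]
    ring
  rw [Acoef, hE, hconj]
  have hπ : (π:ℂ) ≠ 0 := Complex.ofReal_ne_zero.mpr Real.pi_ne_zero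
  have hden : (2 * (π:ℂ) * Complex.I * (j:ℂ)) * -(2 * (π:ℂ) * Complex.I * ((j - k * m : ℤ):ℂ))
      = 4 * (π:ℂ)^2 * (j:ℂ) * ((j - k * m : ℤ):ℂ) := by
    have hI := Complex.I_sq
    linear_combination (-(4*(π:ℂ)^2*(j:ℂ)*((j - k * m : ℤ):ℂ))) * hI
  have hprod : ((c + s * Complex.I) - 1) * ((c - s * Complex.I) - 1) = 2 - 2 * c := by
    have hI := Complex.I_sq
    linear_combination hsc - s^2 * hI
  have hstep : θ j * (c + s * Complex.I - 1) / (2 * ↑π * Complex.I * ↑j)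
        * ((starRingEnd ℂ) (θ (j - k * m)) * (c - s * Complex.I - 1)
          / -(2 * ↑π * Complex.I * ((j - k * m : ℤ):ℂ)))
      = θ j * (starRingEnd ℂ) (θ (j - k * m))
          * (((c + s * Complex.I) - 1) * ((c - s * Complex.I) - 1))
          / (4 * (π:ℂ)^2 * (j:ℂ) * ((j - k * m : ℤ):ℂ)) := by
    rw [div_mul_div_comm, hden]; ring
  rw [hstep, hprod]
  have hcast : ((j - k * m : ℤ):ℂ) = (j:ℂ) - (k:ℂ) * (m:ℂ) := by push_cast; ring
  rw [hcast]
  ring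

lemma orth_sum (m : ℕ) (hm : 1 ≤ m) (d : ℤ) :
    ∑ l ∈ Finset.range m, Complex.exp (2 * π * Complex.I * d * l / m)
      = if (m:ℤ) ∣ d then (m:ℂ) else 0 := by
  have hmC : (m:ℂ) ≠ 0 := Nat.cast_ne_zero.mpr (by omega)
  set z : ℂ := Complex.exp (2 * π * Complex.I * d / m) with hz
  have hzl : ∀ l : ℕ, Complex.exp (2 * π * Complex.I * d * l / m) = z ^ l := by
    intro l
    rw [hz, ← Complex.exp_nat_mul]
    congr 1
    field_simp
  simp only [hzl]
  by_cases hdvd : (m:ℤ) ∣ d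
  · obtain ⟨c, rfl⟩ := hdvd
    have : z = 1 := by
      rw [hz, show (2 * ↑π * Complex.I * ((m * c : ℤ):ℂ) / (m:ℂ)) = (c:ℤ) * (2 * ↑π * Complex.I) by
        push_cast; field_simp]
      exact Complex.exp_int_mul_two_pi_mul_I c
    simp [this]
  · rw [if_neg hdvd]
    have hzm : z ^ m = 1 := by
      rw [hz, ← Complex.exp_nat_mul,
        show ((m:ℕ):ℂ) * (2 * ↑π * Complex.I * (d:ℂ) / (m:ℂ)) = (d:ℤ) * (2 * ↑π * Complex.I) by
          field_simp]
      exact Complex.exp_int_mul_two_pi_mul_I d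
    have hz1 : z ≠ 1 := by
      intro h
      rw [hz, Complex.exp_eq_one_iff] at h
      obtain ⟨n, hn⟩ := h
      apply hdvd
      refine ⟨n, ?_⟩
      have h2πI : (2 * (π:ℂ) * Complex.I) ≠ 0 := by
        simp [Real.pi_ne_zero, Complex.I_ne_zero]
      have h3 : (2*(π:ℂ)*Complex.I) * ((d:ℂ)/m) = (2*(π:ℂ)*Complex.I) * n := by
        linear_combination hn
      have h4 := mul_left_cancel₀ h2πI h3
      rw [div_eq_iff hmC] at h4
      have h5 : (d:ℂ) = (m:ℂ) * n := by linear_combination h4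
      exact_mod_cast h5
    rw [geom_sum_eq hz1, hzm]
    simp

lemma sumB (θ : ℤ → ℂ) (m : ℕ) (hm : 1 ≤ m) (j j' : ℤ) :
    ∑ l ∈ Finset.range m,
        (Acoef θ m j * Complex.exp (2 * π * Complex.I * j * l / m))
          * (starRingEnd ℂ) (Acoef θ m j' * Complex.exp (2 * π * Complex.I * j' * l / m))
      = Acoef θ m j * (starRingEnd ℂ) (Acoef θ m j')
          * (if (m:ℤ) ∣ (j - j') then (m:ℂ) else 0) := by
  have hterm : ∀ l : ℕ,
      (Acoef θ m j * Complex.exp (2 * π * Complex.I * j * l / m))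
        * (starRingEnd ℂ) (Acoef θ m j' * Complex.exp (2 * π * Complex.I * j' * l / m))
      = Acoef θ m j * (starRingEnd ℂ) (Acoef θ m j')
          * Complex.exp (2 * π * Complex.I * ((j - j' : ℤ):ℂ) * l / m) := by
    intro l
    rw [map_mul]
    have hcexp : (starRingEnd ℂ) (Complex.exp (2 * π * Complex.I * j' * l / m))
        = Complex.exp (-(2 * π * Complex.I * j' * l / m)) := by
      rw [← Complex.exp_conj]
      congr 1
      simp only [map_div₀, map_mul, Complex.conj_I, Complex.conj_ofReal, map_intCast,
        map_natCast, map_ofNat]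
      ring
    have hmC : (m:ℂ) ≠ 0 := Nat.cast_ne_zero.mpr (by omega)
    rw [hcexp, mul_mul_mul_comm, ← Complex.exp_add]
    congr 2
    push_cast
    field_simp
    ring
  simp only [hterm]
  rw [← Finset.mul_sum, orth_sum m hm (j - j')]

theorem stmt7 (θ : ℤ → ℂ) (hθ0 : θ 0 = 0)
    (hθ1 : Summable fun j => ‖θ j‖) (hθ2 : Summable fun j : ℤ => ‖θ j‖ ^ 2)
    (m : ℕ) (hm : 1 ≤ m)
    (f : ℝ → ℂ)
    (hf : ∀ x : ℝ, f x = ∑' j : ℤ, θ j * Complex.exp (2 * π * Complex.I * j * x)) :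
    (↑(∑ l ∈ Finset.range m, ‖∫ x in ((l : ℝ) / m)..(((l : ℝ) + 1) / m), f x‖ ^ 2) : ℂ)
      = (m : ℂ) * ∑' k : ℤ, ∑' j : ℤ,
          if j ≠ 0 ∧ j ≠ k * m then
            θ j * (starRingEnd ℂ) (θ (j - k * m)) / (4 * π ^ 2 * j * (j - k * m))
              * (2 - 2 * Real.cos (2 * π * j / m))
          else 0 := by
  classical
  have hmZ : (m:ℤ) ≠ 0 := by omega
  -- abbreviations
  set A : ℤ → ℂ := Acoef θ m with hA
  set B : ℕ → ℤ → ℂ :=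
    fun l j => Acoef θ m j * Complex.exp (2 * π * Complex.I * j * l / m) with hB
  set G : ℤ × ℤ → ℂ := fun p =>
    Acoef θ m p.1 * (starRingEnd ℂ) (Acoef θ m p.2)
      * (if (m:ℤ) ∣ (p.1 - p.2) then (m:ℂ) else 0) with hG
  have hS : ∀ i : ℤ, ‖θ i‖ ≤ ∑' i, ‖θ i‖ := fun i =>
    Summable.le_tsum hθ1 i fun _ _ => norm_nonneg _
  set S : ℝ := ∑' i, ‖θ i‖ with hSdef
  have hS0 : 0 ≤ S := tsum_nonneg fun _ => norm_nonneg _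
  have hA_le : ∀ j, ‖A j‖ ≤ ‖θ j‖ := fun j => normA_le θ m j
  have hA_sum : Summable fun j => ‖A j‖ :=
    hθ1.of_nonneg_of_le (fun j => norm_nonneg _) hA_le
  have hnB : ∀ l j, ‖B l j‖ = ‖A j‖ := fun l j => norm_term'' _ j l m
  have hB_sum : ∀ l, Summable fun j : ℤ => ‖B l j‖ := fun l => by
    simpa only [hnB] using hA_sum
  have hB_sum' : ∀ l, Summable fun j : ℤ => ‖(starRingEnd ℂ) (B l j)‖ := fun l => by
    simpa only [RCLike.norm_conj] using hB_sum l
  have hinj : ∀ j : ℤ, Function.Injective (fun k : ℤ => j - k * m) := by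
    intro j a b h
    simp only at h
    have : a * (m:ℤ) = b * m := by omega
    exact mul_right_cancel₀ hmZ this
  -- step 1 : LHS as sum of z * conj z
  have step1 : (↑(∑ l ∈ Finset.range m,
        ‖∫ x in ((l : ℝ) / m)..(((l : ℝ) + 1) / m), f x‖ ^ 2) : ℂ)
      = ∑ l ∈ Finset.range m,
          (∑' j : ℤ, B l j) * (starRingEnd ℂ) (∑' j : ℤ, B l j) := by
    push_cast
    refine Finset.sum_congr rfl fun l _ => ?_
    rw [← integral_f θ hθ0 hθ1 m hm f hf l, Complex.mul_conj, Complex.normSq_eq_norm_sq]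
    norm_cast
  rw [step1]
  -- step 2 : expand products into double sums and swap with finite sum
  have step2 : ∀ l : ℕ, (∑' j : ℤ, B l j) * (starRingEnd ℂ) (∑' j : ℤ, B l j)
      = ∑' p : ℤ × ℤ, B l p.1 * (starRingEnd ℂ) (B l p.2) := by
    intro l
    rw [show (starRingEnd ℂ) (∑' j : ℤ, B l j) = ∑' j : ℤ, (starRingEnd ℂ) (B l j)
      from tsum_star]
    exact tsum_mul_tsum_of_summable_norm (hB_sum l) (hB_sum' l)
  simp only [step2]
  rw [← Summable.tsum_finsetSum fun l _ => summable_mul_of_summable_norm (hB_sum l) (hB_sum' l)]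
  have step3 : ∀ p : ℤ × ℤ,
      ∑ l ∈ Finset.range m, B l p.1 * (starRingEnd ℂ) (B l p.2) = G p := fun p =>
    sumB θ m hm p.1 p.2
  simp only [step3]
  -- summability facts for G
  have hθθ : Summable fun p : ℤ × ℤ => ‖θ p.1‖ * ‖θ p.2‖ :=
    hθ1.mul_of_nonneg hθ1 (fun _ => norm_nonneg _) (fun _ => norm_nonneg _)
  have hGnorm : ∀ p : ℤ × ℤ, ‖G p‖ ≤ m * (‖θ p.1‖ * ‖θ p.2‖) := by
    intro p
    rw [hG]
    simp only
    rw [norm_mul, norm_mul, RCLike.norm_conj]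
    have h1 : ‖(if (m:ℤ) ∣ (p.1 - p.2) then (m:ℂ) else 0)‖ ≤ m := by
      split
      · simp
      · simp
    calc ‖A p.1‖ * ‖A p.2‖ * ‖(if (m:ℤ) ∣ (p.1 - p.2) then (m:ℂ) else 0)‖
        ≤ ‖θ p.1‖ * ‖θ p.2‖ * m := by
          apply mul_le_mul (mul_le_mul (hA_le p.1) (hA_le p.2) (norm_nonneg _)
            (norm_nonneg _)) h1 (norm_nonneg _) (by positivity)
      _ = m * (‖θ p.1‖ * ‖θ p.2‖) := by ring
  have hG_sum : Summable G := Summable.of_norm_bounded (hθθ.mul_left (m:ℝ)) hGnorm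
  have hGrow : ∀ j : ℤ, Summable fun j' : ℤ => G (j, j') := by
    intro j
    apply Summable.of_norm_bounded (g := fun j' => (m:ℝ) * (‖θ j‖ * ‖θ j'‖))
      (Summable.mul_left (m:ℝ) (hθ1.mul_left ‖θ j‖))
    intro j'
    exact hGnorm (j, j')
  rw [Summable.tsum_prod' hG_sum hGrow]
  -- step 4 : reindex inner sum
  have step4 : ∀ j : ℤ, ∑' j' : ℤ, G (j, j')
      = ∑' k : ℤ, (A j * (starRingEnd ℂ) (A (j - k * m)) * m) := by
    intro j
    rw [← Function.Injective.tsum_eq (hinj j) (f := fun j' => G (j, j')) ?_]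
    · refine tsum_congr fun k => ?_
      have hdvd : (m:ℤ) ∣ (j - (j - k * m)) := ⟨k, by ring⟩
      rw [hG]
      simp only [if_pos hdvd]
      rfl
    · intro j' hj'
      by_contra hno
      apply hj'
      have hnd : ¬ (m:ℤ) ∣ (j - j') := by
        rintro ⟨c, hc⟩
        exact hno ⟨c, by linear_combination hc⟩
      rw [hG]
      simp only [if_neg hnd, mul_zero]
  simp only [step4]
  -- summability for the swap
  have hnormf : ∀ j k : ℤ, ‖A j * (starRingEnd ℂ) (A (j - k * m))‖
      ≤ ‖θ j‖ * ‖θ (j - k * m)‖ := by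
    intro j k
    rw [norm_mul, RCLike.norm_conj]
    exact mul_le_mul (hA_le j) (hA_le _) (norm_nonneg _) (norm_nonneg _)
  have huncnorm : Summable fun p : ℤ × ℤ => ‖θ p.1‖ * ‖θ (p.1 - p.2 * m)‖ := by
    rw [summable_prod_of_nonneg fun p => by positivity]
    constructor
    · intro j
      have hrfl : (fun k : ℤ => ‖θ (j, k).1‖ * ‖θ ((j, k).1 - (j, k).2 * (m:ℤ))‖)
          = fun k : ℤ => ‖θ j‖ * ‖θ (j - k * (m:ℤ))‖ := rfl
      rw [hrfl]
      exact (hθ1.comp_injective (hinj j)).mul_left ‖θ j‖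
    · apply Summable.of_nonneg_of_le
        (fun j => tsum_nonneg fun k => by positivity) (fun j => ?_) (hθ1.mul_right S)
      have hrfl : (fun k : ℤ => ‖θ (j, k).1‖ * ‖θ ((j, k).1 - (j, k).2 * (m:ℤ))‖)
          = fun k : ℤ => ‖θ j‖ * ‖θ (j - k * (m:ℤ))‖ := rfl
      rw [hrfl, tsum_mul_left]
      apply mul_le_mul_of_nonneg_left ?_ (norm_nonneg _)
      exact Summable.tsum_le_tsum_of_inj (fun k : ℤ => j - k * m) (hinj j)
        (fun _ _ => norm_nonneg _) (fun k => le_rfl)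
        (hθ1.comp_injective (hinj j)) hθ1
  have hunc : Summable (Function.uncurry fun j k : ℤ =>
      A j * (starRingEnd ℂ) (A (j - k * m))) := by
    apply Summable.of_norm_bounded huncnorm
    intro p
    exact hnormf p.1 p.2
  have hrow : ∀ j : ℤ, Summable fun k : ℤ => A j * (starRingEnd ℂ) (A (j - k * m)) := by
    intro j
    apply Summable.of_norm_bounded (g := fun k => ‖θ j‖ * ‖θ (j - k * m)‖)
      ((hθ1.comp_injective (hinj j)).mul_left ‖θ j‖) (hnormf j)
  have hcol : ∀ k : ℤ, Summable fun j : ℤ => A j * (starRingEnd ℂ) (A (j - k * m)) := by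
    intro k
    apply Summable.of_norm_bounded (g := fun j => S * ‖θ j‖) (hθ1.mul_left S)
    intro j
    calc ‖A j * (starRingEnd ℂ) (A (j - k * m))‖ ≤ ‖θ j‖ * ‖θ (j - k * m)‖ := hnormf j k
      _ ≤ ‖θ j‖ * S := mul_le_mul_of_nonneg_left (hS _) (norm_nonneg _)
      _ = S * ‖θ j‖ := by ring
  -- finish
  have hrhs : ∀ k j : ℤ,
      (if j ≠ 0 ∧ j ≠ k * m then
        θ j * (starRingEnd ℂ) (θ (j - k * m)) / (4 * π ^ 2 * j * (j - k * m))
          * (2 - 2 * Real.cos (2 * π * j / m))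
      else 0) = A j * (starRingEnd ℂ) (A (j - k * m)) := fun k j =>
    (key_term θ hθ0 m hm k j).symm
  calc ∑' j : ℤ, ∑' k : ℤ, (A j * (starRingEnd ℂ) (A (j - k * m)) * m)
      = ∑' j : ℤ, (∑' k : ℤ, A j * (starRingEnd ℂ) (A (j - k * m))) * m := by
        exact tsum_congr fun j => tsum_mul_right
    _ = (∑' j : ℤ, ∑' k : ℤ, A j * (starRingEnd ℂ) (A (j - k * m))) * m := tsum_mul_right
    _ = (m : ℂ) * ∑' k : ℤ, ∑' j : ℤ, A j * (starRingEnd ℂ) (A (j - k * m)) := by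
        rw [Summable.tsum_comm' hunc hrow hcol]; ring
    _ = (m : ℂ) * ∑' k : ℤ, ∑' j : ℤ,
          (if j ≠ 0 ∧ j ≠ k * m then
            θ j * (starRingEnd ℂ) (θ (j - k * m)) / (4 * π ^ 2 * j * (j - k * m))
              * (2 - 2 * Real.cos (2 * π * j / m))
          else 0) := by
        congr 1
        exact tsum_congr fun k => tsum_congr fun j => (hrhs k j).symm
end

section
/- Let b be a Brownian bridge on [0,1] and F a continuous distribution function on [0,1]. Define T²(g) = ∫₀¹ g(t)² dt. Then E[|T²(b∘F) − T²(b)|] ≤ C · (∫₀¹ (F(t) − t)² dt)^{1/8} for an absolute constant C. -/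
open Real MeasureTheory ProbabilityTheory

lemma cs_int {α : Type*} [MeasurableSpace α] (μ : Measure α) (f g : α → ℝ)
    (hfm : AEStronglyMeasurable f μ) (hgm : AEStronglyMeasurable g μ)
    (hf : Integrable (fun a => f a ^ 2) μ) (hg : Integrable (fun a => g a ^ 2) μ) :
    ∫ a, |f a * g a| ∂μ ≤ (∫ a, f a ^ 2 ∂μ) ^ ((1:ℝ)/2) * (∫ a, g a ^ 2 ∂μ) ^ ((1:ℝ)/2) := by
  have hpq : Real.HolderConjugate 2 2 := Real.holderConjugate_iff.mpr ⟨one_lt_two, by norm_num⟩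
  have hf2 : MemLp f (ENNReal.ofReal 2) μ := by
    rw [show ENNReal.ofReal 2 = 2 by norm_num]
    exact (memLp_two_iff_integrable_sq hfm).2 hf
  have hg2 : MemLp g (ENNReal.ofReal 2) μ := by
    rw [show ENNReal.ofReal 2 = 2 by norm_num]
    exact (memLp_two_iff_integrable_sq hgm).2 hg
  have h := MeasureTheory.integral_mul_norm_le_Lp_mul_Lq hpq hf2 hg2
  have e1 : ∀ x : ℝ, ‖x‖ ^ (2:ℝ) = x ^ 2 := fun x => by
    rw [show (2:ℝ) = ((2:ℕ):ℝ) by norm_num, Real.rpow_natCast]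
    simp [sq_abs]
  simp only [e1] at h
  calc ∫ a, |f a * g a| ∂μ = ∫ a, ‖f a‖ * ‖g a‖ ∂μ := by
        congr 1; funext a; rw [abs_mul]; rfl
    _ ≤ _ := h

lemma l1_le_l2 {α : Type*} [MeasurableSpace α] (μ : Measure α) [IsProbabilityMeasure μ]
    (f : α → ℝ) (hfm : AEStronglyMeasurable f μ) (hf : Integrable (fun a => f a ^ 2) μ) :
    ∫ a, |f a| ∂μ ≤ (∫ a, f a ^ 2 ∂μ) ^ ((1:ℝ)/2) := by
  have h := cs_int μ f (fun _ => 1) hfm aestronglyMeasurable_const hf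
    (by simpa using integrable_const (1:ℝ))
  simpa using h

set_option maxHeartbeats 1000000 in
theorem stmt12 {Ω : Type*} [MeasurableSpace Ω] (P : Measure Ω) [IsProbabilityMeasure P]
    (b : ℝ → Ω → ℝ) (hmeas : Measurable (Function.uncurry b))
    (hmean : ∀ t ∈ Set.Icc (0 : ℝ) 1, ∫ ω, b t ω ∂P = 0)
    (hcov : ∀ s ∈ Set.Icc (0 : ℝ) 1, ∀ t ∈ Set.Icc (0 : ℝ) 1,
      ∫ ω, b s ω * b t ω ∂P = min s t - s * t)
    (hsqint : Integrable (fun p : Ω × ℝ => (b p.2 p.1) ^ 2)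
      (P.prod (volume.restrict (Set.Ioc 0 1)))) :
    ∃ C : ℝ, 0 < C ∧
      ∀ F : ℝ → ℝ, MonotoneOn F (Set.Icc 0 1) → ContinuousOn F (Set.Icc 0 1) →
        F 0 = 0 → F 1 = 1 → (∀ t ∈ Set.Icc (0 : ℝ) 1, F t ∈ Set.Icc (0 : ℝ) 1) →
        Integrable (fun p : Ω × ℝ => (b (F p.2) p.1) ^ 2)
          (P.prod (volume.restrict (Set.Ioc 0 1))) →
        Integrable (fun ω => |(∫ t in Set.Ioc (0 : ℝ) 1, (b (F t) ω) ^ 2)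
          - ∫ t in Set.Ioc (0 : ℝ) 1, (b t ω) ^ 2|) P →
        (∫ ω, |(∫ t in Set.Ioc (0 : ℝ) 1, (b (F t) ω) ^ 2)
            - ∫ t in Set.Ioc (0 : ℝ) 1, (b t ω) ^ 2| ∂P)
          ≤ C * (∫ t in Set.Ioc (0 : ℝ) 1, (F t - t) ^ 2) ^ ((1 : ℝ) / 8) := by
  refine ⟨1, one_pos, ?_⟩
  intro F hFmono hFcont hF0 hF1 hFmem hFint hLHSint
  set μt : Measure ℝ := volume.restrict (Set.Ioc 0 1) with hμt
  have hprobt : IsProbabilityMeasure μt := ⟨by simp [hμt]⟩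
  set μ : Measure (Ω × ℝ) := P.prod μt with hμ
  -- measurability
  have hg_m : AEStronglyMeasurable (fun p : Ω × ℝ => b p.2 p.1) μ :=
    (hmeas.comp measurable_swap).aestronglyMeasurable
  have hFaem : AEMeasurable F μt :=
    (hFcont.mono Set.Ioc_subset_Icc_self).aemeasurable measurableSet_Ioc
  have hFsnd : AEMeasurable (fun p : Ω × ℝ => F p.2) μ :=
    hFaem.comp_quasiMeasurePreserving Measure.quasiMeasurePreserving_snd
  have hf_m : AEStronglyMeasurable (fun p : Ω × ℝ => b (F p.2) p.1) μ := by
    have h1 : AEMeasurable (fun p : Ω × ℝ => (F p.2, p.1)) μ :=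
      hFsnd.prodMk measurable_fst.aemeasurable
    exact (hmeas.comp_aemeasurable h1).aestronglyMeasurable
  have hdm : AEStronglyMeasurable (fun p : Ω × ℝ => b (F p.2) p.1 - b p.2 p.1) μ :=
    hf_m.sub hg_m
  have hsm : AEStronglyMeasurable (fun p : Ω × ℝ => b (F p.2) p.1 + b p.2 p.1) μ :=
    hf_m.add hg_m
  have hbound : Integrable (fun p : Ω × ℝ =>
      2 * b (F p.2) p.1 ^ 2 + 2 * b p.2 p.1 ^ 2) μ :=
    (hFint.const_mul 2).add (hsqint.const_mul 2)
  have hdsq : Integrable (fun p : Ω × ℝ => (b (F p.2) p.1 - b p.2 p.1) ^ 2) μ := by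
    refine Integrable.mono' hbound (by simpa [pow_two, Pi.mul_def] using hdm.mul hdm) ?_
    filter_upwards with p
    rw [Real.norm_eq_abs, abs_of_nonneg (sq_nonneg _)]
    nlinarith [sq_nonneg (b (F p.2) p.1 + b p.2 p.1)]
  have hssq : Integrable (fun p : Ω × ℝ => (b (F p.2) p.1 + b p.2 p.1) ^ 2) μ := by
    refine Integrable.mono' hbound (by simpa [pow_two, Pi.mul_def] using hsm.mul hsm) ?_
    filter_upwards with p
    rw [Real.norm_eq_abs, abs_of_nonneg (sq_nonneg _)]
    nlinarith [sq_nonneg (b (F p.2) p.1 - b p.2 p.1)]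
  have hprodint : Integrable (fun p : Ω × ℝ =>
      |(b (F p.2) p.1 - b p.2 p.1) * (b (F p.2) p.1 + b p.2 p.1)|) μ := by
    refine Integrable.mono' hbound (by simpa [Real.norm_eq_abs, abs_mul] using (hdm.mul hsm).norm) ?_
    filter_upwards with p
    rw [Real.norm_eq_abs, abs_abs, abs_mul]
    nlinarith [sq_nonneg (b (F p.2) p.1 - b p.2 p.1), sq_nonneg (b (F p.2) p.1 + b p.2 p.1),
      abs_nonneg (b (F p.2) p.1 - b p.2 p.1), abs_nonneg (b (F p.2) p.1 + b p.2 p.1),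
      sq_abs (b (F p.2) p.1 - b p.2 p.1), sq_abs (b (F p.2) p.1 + b p.2 p.1),
      sq_nonneg (|b (F p.2) p.1 - b p.2 p.1| - |b (F p.2) p.1 + b p.2 p.1|)]
  set A : ℝ := ∫ p, (b (F p.2) p.1 - b p.2 p.1) ^ 2 ∂μ with hA
  set B : ℝ := ∫ p, (b (F p.2) p.1 + b p.2 p.1) ^ 2 ∂μ with hB
  set D : ℝ := ∫ t, (F t - t) ^ 2 ∂μt with hD
  -- Step 1-2
  have step12 : (∫ ω, |(∫ t, b (F t) ω ^ 2 ∂μt) - ∫ t, b t ω ^ 2 ∂μt| ∂P)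
      ≤ ∫ p, |(b (F p.2) p.1 - b p.2 p.1) * (b (F p.2) p.1 + b p.2 p.1)| ∂μ := by
    rw [hμ, MeasureTheory.integral_prod _ hprodint]
    refine integral_mono_ae hLHSint hprodint.integral_prod_left ?_
    filter_upwards [hFint.prod_right_ae, hsqint.prod_right_ae] with ω h1 h2
    calc |(∫ t, b (F t) ω ^ 2 ∂μt) - ∫ t, b t ω ^ 2 ∂μt|
        = |∫ t, (b (F t) ω ^ 2 - b t ω ^ 2) ∂μt| := by rw [integral_sub h1 h2]
      _ ≤ ∫ t, |b (F t) ω ^ 2 - b t ω ^ 2| ∂μt := by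
          simpa [Real.norm_eq_abs] using
            norm_integral_le_integral_norm (fun t => b (F t) ω ^ 2 - b t ω ^ 2) (μ := μt)
      _ = ∫ t, |(b (F t) ω - b t ω) * (b (F t) ω + b t ω)| ∂μt := by
          congr 1; funext t; congr 1; ring
  -- Step 3 : Cauchy-Schwarz
  have step3 : (∫ p, |(b (F p.2) p.1 - b p.2 p.1) * (b (F p.2) p.1 + b p.2 p.1)| ∂μ)
      ≤ A ^ ((1:ℝ)/2) * B ^ ((1:ℝ)/2) :=
    cs_int μ _ _ hdm hsm hdsq hssq
  -- pointwise (in t) second-moment computations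
  have key : ∀ᵐ t ∂μt, ((∫ ω, (b (F t) ω - b t ω) ^ 2 ∂P) ≤ |F t - t|
      ∧ (∫ ω, (b (F t) ω + b t ω) ^ 2 ∂P) ≤ 1) := by
    filter_upwards [hFint.prod_left_ae, hsqint.prod_left_ae,
      ae_restrict_mem measurableSet_Ioc] with t h1 h2 ht
    have htI : t ∈ Set.Icc (0:ℝ) 1 := ⟨le_of_lt ht.1, ht.2⟩
    have hFtI : F t ∈ Set.Icc (0:ℝ) 1 := hFmem t htI
    have hbm : ∀ s : ℝ, AEStronglyMeasurable (fun ω => b s ω) P := fun s =>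
      (hmeas.comp measurable_prodMk_left).aestronglyMeasurable
    have hsum : Integrable (fun ω => b (F t) ω ^ 2 + b t ω ^ 2) P := h1.add h2
    have hcross : Integrable (fun ω => b (F t) ω * b t ω) P := by
      refine Integrable.mono' hsum ((hbm (F t)).mul (hbm t)) ?_
      filter_upwards with ω
      rw [Real.norm_eq_abs, abs_mul]
      nlinarith [sq_nonneg (|b (F t) ω| - |b t ω|), sq_abs (b (F t) ω), sq_abs (b t ω),
        abs_nonneg (b (F t) ω), abs_nonneg (b t ω)]
    have vF : ∫ ω, b (F t) ω ^ 2 ∂P = F t - F t * F t := by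
      have h := hcov (F t) hFtI (F t) hFtI
      simp only [min_self] at h
      calc ∫ ω, b (F t) ω ^ 2 ∂P = ∫ ω, b (F t) ω * b (F t) ω ∂P := by simp [pow_two]
        _ = F t - F t * F t := h
    have vG : ∫ ω, b t ω ^ 2 ∂P = t - t * t := by
      have h := hcov t htI t htI
      simp only [min_self] at h
      calc ∫ ω, b t ω ^ 2 ∂P = ∫ ω, b t ω * b t ω ∂P := by simp [pow_two]
        _ = t - t * t := h
    have vC : ∫ ω, b (F t) ω * b t ω ∂P = min (F t) t - F t * t := hcov (F t) hFtI t htI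
    have hsub : ∫ ω, (b (F t) ω - b t ω) ^ 2 ∂P
        = (F t - F t * F t) + (t - t * t) - 2 * (min (F t) t - F t * t) := by
      have e : (fun ω => (b (F t) ω - b t ω) ^ 2)
          = fun ω => (b (F t) ω ^ 2 + b t ω ^ 2) - 2 * (b (F t) ω * b t ω) :=
        funext fun ω => by ring
      rw [e, integral_sub hsum (hcross.const_mul 2), integral_add h1 h2,
        integral_const_mul, vF, vG, vC]
    have hadd : ∫ ω, (b (F t) ω + b t ω) ^ 2 ∂P
        = (F t - F t * F t) + (t - t * t) + 2 * (min (F t) t - F t * t) := by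
      have e : (fun ω => (b (F t) ω + b t ω) ^ 2)
          = fun ω => (b (F t) ω ^ 2 + b t ω ^ 2) + 2 * (b (F t) ω * b t ω) :=
        funext fun ω => by ring
      rw [e, integral_add hsum (hcross.const_mul 2), integral_add h1 h2,
        integral_const_mul, vF, vG, vC]
    constructor
    · rw [hsub]
      rcases le_total (F t) t with h | h
      · rw [min_eq_left h, abs_of_nonpos (by linarith)]
        nlinarith [sq_nonneg (F t - t)]
      · rw [min_eq_right h, abs_of_nonneg (by linarith)]
        nlinarith [sq_nonneg (F t - t)]
    · rw [hadd]
      rcases le_total (F t) t with h | h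
      · rw [min_eq_left h]
        nlinarith [sq_nonneg (F t - 1/2), sq_nonneg (t - 1/2),
          mul_nonneg (sub_nonneg.2 h) (sub_nonneg.2 htI.2), hFtI.1, hFtI.2]
      · rw [min_eq_right h]
        nlinarith [sq_nonneg (F t - 1/2), sq_nonneg (t - 1/2),
          mul_nonneg (sub_nonneg.2 h) (sub_nonneg.2 hFtI.2), htI.1, htI.2]
  -- bound A
  have hFsub_m : AEStronglyMeasurable (fun t => F t - t) μt :=
    (hFaem.sub aemeasurable_id).aestronglyMeasurable
  have habs_bd : ∀ᵐ t ∂μt, |F t - t| ≤ 1 := by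
    filter_upwards [ae_restrict_mem measurableSet_Ioc] with t ht
    have htI : t ∈ Set.Icc (0:ℝ) 1 := ⟨le_of_lt ht.1, ht.2⟩
    have hFtI : F t ∈ Set.Icc (0:ℝ) 1 := hFmem t htI
    rw [abs_le]
    constructor <;> [linarith [hFtI.1, htI.2]; linarith [hFtI.2, htI.1]]
  have habs_int : Integrable (fun t => |F t - t|) μt := by
    refine Integrable.mono' (integrable_const 1) (by simpa [Real.norm_eq_abs] using hFsub_m.norm : AEStronglyMeasurable (fun t => |F t - t|) μt) ?_
    filter_upwards [habs_bd] with t ht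
    rwa [Real.norm_eq_abs, abs_abs]
  have hDint : Integrable (fun t => (F t - t) ^ 2) μt := by
    refine Integrable.mono' (integrable_const 1) (by simpa [pow_two, Pi.mul_def] using hFsub_m.mul hFsub_m) ?_
    filter_upwards [habs_bd] with t ht
    rw [Real.norm_eq_abs, abs_of_nonneg (sq_nonneg _)]
    nlinarith [abs_nonneg (F t - t), sq_abs (F t - t)]
  have hAeq : A = ∫ t, (∫ ω, (b (F t) ω - b t ω) ^ 2 ∂P) ∂μt := by
    rw [hA, hμ]; exact integral_prod_symm _ hdsq
  have hAle : A ≤ ∫ t, |F t - t| ∂μt := by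
    rw [hAeq]
    refine integral_mono_ae hdsq.integral_prod_right habs_int ?_
    exact key.mono fun t ht => ht.1
  have hD12 : (∫ t, |F t - t| ∂μt) ≤ D ^ ((1:ℝ)/2) :=
    l1_le_l2 μt _ hFsub_m hDint
  -- bound B
  have hBle : B ≤ 1 := by
    have hBeq : B = ∫ t, (∫ ω, (b (F t) ω + b t ω) ^ 2 ∂P) ∂μt := by
      rw [hB, hμ]; exact integral_prod_symm _ hssq
    rw [hBeq]
    calc (∫ t, (∫ ω, (b (F t) ω + b t ω) ^ 2 ∂P) ∂μt) ≤ ∫ _, (1:ℝ) ∂μt :=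
          integral_mono_ae hssq.integral_prod_right (integrable_const 1)
            (key.mono fun t ht => ht.2)
      _ = 1 := by simp
  -- elementary bounds on A, B, D
  have hA0 : 0 ≤ A := integral_nonneg fun p => sq_nonneg _
  have hB0 : 0 ≤ B := integral_nonneg fun p => sq_nonneg _
  have hD0 : 0 ≤ D := integral_nonneg fun t => sq_nonneg _
  have hD1 : D ≤ 1 := by
    rw [hD]
    calc (∫ t, (F t - t) ^ 2 ∂μt) ≤ ∫ _, (1:ℝ) ∂μt := by
          refine integral_mono_ae hDint (integrable_const 1) ?_
          filter_upwards [habs_bd] with t ht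
          nlinarith [sq_abs (F t - t), abs_nonneg (F t - t)]
      _ = 1 := by simp
  -- final chain
  have hA12 : A ^ ((1:ℝ)/2) ≤ D ^ ((1:ℝ)/4) := by
    have h1 : A ^ ((1:ℝ)/2) ≤ (D ^ ((1:ℝ)/2)) ^ ((1:ℝ)/2) :=
      Real.rpow_le_rpow hA0 (hAle.trans hD12) (by norm_num)
    have h2 : (D ^ ((1:ℝ)/2)) ^ ((1:ℝ)/2) = D ^ ((1:ℝ)/4) := by
      rw [← Real.rpow_mul hD0]; norm_num
    linarith [h1, h2.le, h2.ge]
  have hB12 : B ^ ((1:ℝ)/2) ≤ 1 := Real.rpow_le_one hB0 hBle (by norm_num)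
  have hD48 : D ^ ((1:ℝ)/4) ≤ D ^ ((1:ℝ)/8) := by
    rcases eq_or_lt_of_le hD0 with h | h
    · rw [← h, Real.zero_rpow (by norm_num), Real.zero_rpow (by norm_num)]
    · exact Real.rpow_le_rpow_of_exponent_ge h hD1 (by norm_num)
  have hAB : A ^ ((1:ℝ)/2) * B ^ ((1:ℝ)/2) ≤ D ^ ((1:ℝ)/4) := by
    calc A ^ ((1:ℝ)/2) * B ^ ((1:ℝ)/2) ≤ D ^ ((1:ℝ)/4) * 1 :=
          mul_le_mul hA12 hB12 (Real.rpow_nonneg hB0 _) (Real.rpow_nonneg hD0 _)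
      _ = D ^ ((1:ℝ)/4) := mul_one _
  calc (∫ ω, |(∫ t, b (F t) ω ^ 2 ∂μt) - ∫ t, b t ω ^ 2 ∂μt| ∂P)
      ≤ A ^ ((1:ℝ)/2) * B ^ ((1:ℝ)/2) := step12.trans step3
    _ ≤ D ^ ((1:ℝ)/4) := hAB
    _ ≤ D ^ ((1:ℝ)/8) := hD48
    _ = 1 * D ^ ((1:ℝ)/8) := (one_mul _).symm
end

section
/- Let ξ₁, ξ₂ be independent standard Gaussian random variables, and let a, b ∈ ℝ and x > 0. Then P((ξ₁+a)² + ¼(ξ₂+b)² ≤ x), viewed as a function of x, has a density that is bounded above by a constant depending only on an upper bound C for |a| and |b| (uniformly over |a| ≤ C, |b| ≤ C, x > 0). -/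
open Real MeasureTheory ProbabilityTheory
open scoped NNReal ENNReal

-- pointwise bound on gaussian pdf
lemma gaussPDF_le (s : ℝ) : gaussianPDF 0 1 s ≤ ENNReal.ofReal (√(2 * π))⁻¹ := by
  rw [gaussianPDF]
  apply ENNReal.ofReal_le_ofReal
  unfold gaussianPDFReal
  have h1 : Real.exp (-(s - 0) ^ 2 / (2 * ((1:ℝ≥0):ℝ))) ≤ 1 := by
    rw [Real.exp_le_one_iff]
    have : (0:ℝ) ≤ (s - 0)^2 := sq_nonneg _
    have : (0:ℝ) < 2 * ((1:ℝ≥0):ℝ) := by norm_num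
    apply div_nonpos_of_nonpos_of_nonneg <;> nlinarith [sq_nonneg (s - 0)]
  calc (√(2 * π * ((1:ℝ≥0):ℝ)))⁻¹ * Real.exp (-(s - 0) ^ 2 / (2 * ((1:ℝ≥0):ℝ)))
      ≤ (√(2 * π * ((1:ℝ≥0):ℝ)))⁻¹ * 1 := by
        apply mul_le_mul_of_nonneg_left h1 (by positivity)
    _ = (√(2 * π))⁻¹ := by norm_num

lemma gauss_le (A : Set ℝ) : gaussianReal 0 1 A ≤ ENNReal.ofReal (√(2 * π))⁻¹ * volume A := by
  rw [gaussianReal_apply 0 one_ne_zero A]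
  calc ∫⁻ s in A, gaussianPDF 0 1 s
      ≤ ∫⁻ _ in A, ENNReal.ofReal (√(2 * π))⁻¹ := by
        exact setLIntegral_mono (by fun_prop) (fun s _ => gaussPDF_le s)
    _ = ENNReal.ofReal (√(2 * π))⁻¹ * volume A := by
        rw [setLIntegral_const, mul_comm]

lemma prod_gauss_le (A : Set (ℝ × ℝ)) (hA : MeasurableSet A) :
    ((gaussianReal 0 1).prod (gaussianReal 0 1)) A
      ≤ ENNReal.ofReal (2 * π)⁻¹ * (volume.prod volume) A := by
  have hc2 : ENNReal.ofReal (√(2 * π))⁻¹ * ENNReal.ofReal (√(2 * π))⁻¹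
      = ENNReal.ofReal (2 * π)⁻¹ := by
    rw [← ENNReal.ofReal_mul (by positivity), ← mul_inv,
      Real.mul_self_sqrt (by positivity)]
  have hmeas : Measurable fun s => volume (Prod.mk s ⁻¹' A) :=
    measurable_measure_prodMk_left hA
  calc ((gaussianReal 0 1).prod (gaussianReal 0 1)) A
      = ∫⁻ s, gaussianReal 0 1 (Prod.mk s ⁻¹' A) ∂(gaussianReal 0 1) :=
        Measure.prod_apply hA
    _ ≤ ∫⁻ s, ENNReal.ofReal (√(2 * π))⁻¹ * volume (Prod.mk s ⁻¹' A) ∂(gaussianReal 0 1) :=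
        lintegral_mono (fun s => gauss_le _)
    _ = ∫⁻ s, gaussianPDF 0 1 s * (ENNReal.ofReal (√(2 * π))⁻¹ * volume (Prod.mk s ⁻¹' A)) := by
        rw [gaussianReal_of_var_ne_zero 0 one_ne_zero,
          lintegral_withDensity_eq_lintegral_mul _ (measurable_gaussianPDF 0 1)
            (hmeas.const_mul _)]
        rfl
    _ ≤ ∫⁻ s, ENNReal.ofReal (√(2 * π))⁻¹ * (ENNReal.ofReal (√(2 * π))⁻¹ * volume (Prod.mk s ⁻¹' A)) :=
        lintegral_mono (fun s => mul_le_mul_left (gaussPDF_le s) _)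
    _ = ENNReal.ofReal (2 * π)⁻¹ * (volume.prod volume) A := by
        rw [lintegral_const_mul' _ _ ENNReal.ofReal_ne_top,
          lintegral_const_mul' _ _ ENNReal.ofReal_ne_top, ← mul_assoc, hc2,
          Measure.prod_apply hA]

lemma annulus_vol {x y : ℝ} (hx : 0 ≤ x) (hxy : x ≤ y) :
    (volume.prod volume) {q : ℝ × ℝ | x < q.1 ^ 2 + q.2 ^ 2 ∧ q.1 ^ 2 + q.2 ^ 2 ≤ y}
      ≤ ENNReal.ofReal (π * (y - x)) := by
  have hy : 0 ≤ y := hx.trans hxy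
  have hpre : Complex.measurableEquivRealProd ⁻¹'
      {q : ℝ × ℝ | x < q.1 ^ 2 + q.2 ^ 2 ∧ q.1 ^ 2 + q.2 ^ 2 ≤ y}
      = Metric.closedBall (0:ℂ) (√y) \ Metric.closedBall (0:ℂ) (√x) := by
    ext z
    have hz : z.re ^ 2 + z.im ^ 2 = ‖z‖ ^ 2 := by
      rw [Complex.sq_norm, Complex.normSq_apply]; ring
    simp only [Set.mem_preimage, Complex.measurableEquivRealProd_apply, Set.mem_setOf_eq,
      Set.mem_diff, Metric.mem_closedBall, dist_zero_right, not_le, hz]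
    constructor
    · rintro ⟨h1, h2⟩
      refine ⟨?_, ?_⟩
      · rw [← Real.sqrt_sq (norm_nonneg z)]; exact Real.sqrt_le_sqrt h2
      · rw [← Real.sqrt_sq (norm_nonneg z)]; exact Real.sqrt_lt_sqrt hx h1
    · rintro ⟨h1, h2⟩
      constructor
      · have := Real.sq_sqrt hx ▸ pow_lt_pow_left₀ h2 (Real.sqrt_nonneg x) two_ne_zero
        linarith [this]
      · have := pow_le_pow_left₀ (norm_nonneg z) h1 2
        rwa [Real.sq_sqrt hy] at this
  have hsub : Metric.closedBall (0:ℂ) (√x) ⊆ Metric.closedBall (0:ℂ) (√y) :=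
    Metric.closedBall_subset_closedBall (Real.sqrt_le_sqrt hxy)
  have hset : MeasurableSet {q : ℝ × ℝ | x < q.1 ^ 2 + q.2 ^ 2 ∧ q.1 ^ 2 + q.2 ^ 2 ≤ y} := by
    apply MeasurableSet.inter
    · exact measurableSet_lt measurable_const
        ((measurable_fst.pow_const 2).add (measurable_snd.pow_const 2))
    · exact measurableSet_le
        ((measurable_fst.pow_const 2).add (measurable_snd.pow_const 2)) measurable_const
  calc (volume.prod volume) {q : ℝ × ℝ | x < q.1 ^ 2 + q.2 ^ 2 ∧ q.1 ^ 2 + q.2 ^ 2 ≤ y}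
      = volume {q : ℝ × ℝ | x < q.1 ^ 2 + q.2 ^ 2 ∧ q.1 ^ 2 + q.2 ^ 2 ≤ y} := by
        rw [← Measure.volume_eq_prod]
    _ = volume (Metric.closedBall (0:ℂ) (√y) \ Metric.closedBall (0:ℂ) (√x)) := by
        rw [← Complex.volume_preserving_equiv_real_prod.measure_preimage hset.nullMeasurableSet,
          hpre]
    _ = ENNReal.ofReal (√y) ^ 2 * NNReal.pi - ENNReal.ofReal (√x) ^ 2 * NNReal.pi := by
        have hfin : volume (Metric.closedBall (0:ℂ) (√x)) ≠ ⊤ := by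
          rw [Complex.volume_closedBall]
          exact ENNReal.mul_ne_top (by simp) ENNReal.coe_ne_top
        rw [measure_diff hsub measurableSet_closedBall.nullMeasurableSet hfin,
          Complex.volume_closedBall, Complex.volume_closedBall]
    _ ≤ ENNReal.ofReal (π * (y - x)) := by
        have hpi : (NNReal.pi : ℝ≥0∞) = ENNReal.ofReal π := by
          rw [← ENNReal.ofReal_coe_nnreal, NNReal.coe_real_pi]
        rw [← ENNReal.ofReal_pow (Real.sqrt_nonneg _), ← ENNReal.ofReal_pow (Real.sqrt_nonneg _),
          Real.sq_sqrt hx, Real.sq_sqrt hy, hpi, ← ENNReal.ofReal_mul hy,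
          ← ENNReal.ofReal_mul hx, ← ENNReal.ofReal_sub _ (by positivity)]
        exact ENNReal.ofReal_le_ofReal (le_of_eq (by ring))

lemma region_vol (a b : ℝ) {x y : ℝ} (hx : 0 ≤ x) (hxy : x ≤ y) :
    (volume.prod volume) {p : ℝ × ℝ | x < (p.1 + a) ^ 2 + (1 / 4) * (p.2 + b) ^ 2 ∧
        (p.1 + a) ^ 2 + (1 / 4) * (p.2 + b) ^ 2 ≤ y}
      ≤ ENNReal.ofReal (2 * π * (y - x)) := by
  set A : Set (ℝ × ℝ) := {q : ℝ × ℝ | x < q.1 ^ 2 + q.2 ^ 2 ∧ q.1 ^ 2 + q.2 ^ 2 ≤ y} with hAdef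
  have hA : MeasurableSet A := by
    apply MeasurableSet.inter
    · exact measurableSet_lt measurable_const
        ((measurable_fst.pow_const 2).add (measurable_snd.pow_const 2))
    · exact measurableSet_le
        ((measurable_fst.pow_const 2).add (measurable_snd.pow_const 2)) measurable_const
  have hf1 : Measurable fun s : ℝ => s + a := measurable_add_const a
  have hf2 : Measurable fun t : ℝ => 2⁻¹ * (t + b) := (measurable_add_const b).const_mul _
  have hD : {p : ℝ × ℝ | x < (p.1 + a) ^ 2 + (1 / 4) * (p.2 + b) ^ 2 ∧
        (p.1 + a) ^ 2 + (1 / 4) * (p.2 + b) ^ 2 ≤ y}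
      = Prod.map (fun s : ℝ => s + a) (fun t : ℝ => 2⁻¹ * (t + b)) ⁻¹' A := by
    ext p
    have : (2⁻¹ * (p.2 + b)) ^ 2 = (1 / 4) * (p.2 + b) ^ 2 := by ring
    simp [hAdef, Prod.map, this]
  have hmap1 : Measure.map (fun s : ℝ => s + a) volume = volume :=
    map_add_right_eq_self volume a
  have hmap2 : Measure.map (fun t : ℝ => 2⁻¹ * (t + b)) volume
      = ENNReal.ofReal 2 • volume := by
    have : (fun t : ℝ => 2⁻¹ * (t + b)) = (fun t : ℝ => 2⁻¹ * t) ∘ (fun t : ℝ => t + b) := rfl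
    rw [this, ← Measure.map_map (measurable_const_mul _) (measurable_add_const b),
      map_add_right_eq_self volume b, Real.map_volume_mul_left (by norm_num : (2⁻¹:ℝ) ≠ 0)]
    norm_num
  calc (volume.prod volume) {p : ℝ × ℝ | x < (p.1 + a) ^ 2 + (1 / 4) * (p.2 + b) ^ 2 ∧
        (p.1 + a) ^ 2 + (1 / 4) * (p.2 + b) ^ 2 ≤ y}
      = (Measure.map (Prod.map (fun s : ℝ => s + a) (fun t : ℝ => 2⁻¹ * (t + b)))
          (volume.prod volume)) A := by
        rw [Measure.map_apply (hf1.prodMap hf2) hA, hD]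
    _ = (volume.prod (ENNReal.ofReal 2 • volume)) A := by
        rw [← Measure.map_prod_map _ _ hf1 hf2, hmap1, hmap2]
    _ = ENNReal.ofReal 2 * (volume.prod volume) A := by
        rw [Measure.prod_apply hA, Measure.prod_apply hA,
          ← lintegral_const_mul' _ _ ENNReal.ofReal_ne_top]
        rfl
    _ ≤ ENNReal.ofReal 2 * ENNReal.ofReal (π * (y - x)) :=
        mul_le_mul_right (annulus_vol hx hxy) _
    _ = ENNReal.ofReal (2 * π * (y - x)) := by
        rw [← ENNReal.ofReal_mul (by norm_num), ← mul_assoc]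

theorem stmt15 {Ω : Type*} [MeasurableSpace Ω] (P : Measure Ω) [IsProbabilityMeasure P]
    (ξ₁ ξ₂ : Ω → ℝ) (h1 : Measurable ξ₁) (h2 : Measurable ξ₂)
    (hlaw1 : P.map ξ₁ = gaussianReal 0 1) (hlaw2 : P.map ξ₂ = gaussianReal 0 1)
    (hindep : IndepFun ξ₁ ξ₂ P) (C : ℝ) (hC : 0 < C) :
    ∃ M : ℝ, 0 < M ∧ ∀ a b : ℝ, |a| ≤ C → |b| ≤ C → ∀ x y : ℝ, 0 ≤ x → x ≤ y →
      (P {ω | (ξ₁ ω + a) ^ 2 + (1 / 4) * (ξ₂ ω + b) ^ 2 ≤ y}).toReal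
        - (P {ω | (ξ₁ ω + a) ^ 2 + (1 / 4) * (ξ₂ ω + b) ^ 2 ≤ x}).toReal
        ≤ M * (y - x) := by
  refine ⟨1, one_pos, fun a b _ _ x y hx hxy => ?_⟩
  set μ : Measure (ℝ × ℝ) := (gaussianReal 0 1).prod (gaussianReal 0 1) with hμdef
  have hmap : P.map (fun ω => (ξ₁ ω, ξ₂ ω)) = μ := by
    have h := (indepFun_iff_map_prod_eq_prod_map_map h1.aemeasurable h2.aemeasurable).mp hindep
    rw [h, hlaw1, hlaw2]
  have hmeasf : Measurable fun p : ℝ × ℝ => (p.1 + a) ^ 2 + (1 / 4) * (p.2 + b) ^ 2 :=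
    (((measurable_fst.add_const a).pow_const 2).add
      (((measurable_snd.add_const b).pow_const 2).const_mul _))
  set S : ℝ → Set (ℝ × ℝ) :=
    fun z => {p : ℝ × ℝ | (p.1 + a) ^ 2 + (1 / 4) * (p.2 + b) ^ 2 ≤ z} with hSdef
  have hS : ∀ z, MeasurableSet (S z) := fun z => measurableSet_le hmeasf measurable_const
  have hP : ∀ z, P {ω | (ξ₁ ω + a) ^ 2 + (1 / 4) * (ξ₂ ω + b) ^ 2 ≤ z} = μ (S z) := by
    intro z
    rw [← hmap, Measure.map_apply (h1.prodMk h2) (hS z)]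
    rfl
  set D : Set (ℝ × ℝ) := {p : ℝ × ℝ | x < (p.1 + a) ^ 2 + (1 / 4) * (p.2 + b) ^ 2 ∧
      (p.1 + a) ^ 2 + (1 / 4) * (p.2 + b) ^ 2 ≤ y} with hDdef
  have hDmeas : MeasurableSet D :=
    (measurableSet_lt measurable_const hmeasf).inter (measurableSet_le hmeasf measurable_const)
  have hDle : μ D ≤ ENNReal.ofReal (y - x) := by
    calc μ D ≤ ENNReal.ofReal (2 * π)⁻¹ * (volume.prod volume) D := prod_gauss_le D hDmeas
      _ ≤ ENNReal.ofReal (2 * π)⁻¹ * ENNReal.ofReal (2 * π * (y - x)) :=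
          mul_le_mul_right (region_vol a b hx hxy) _
      _ = ENNReal.ofReal (y - x) := by
          rw [← ENNReal.ofReal_mul (by positivity)]
          congr 1
          field_simp
  have hsub : μ (S y) ≤ μ (S x) + μ D := by
    refine le_trans (measure_mono ?_) (measure_union_le _ _)
    intro p hp
    by_cases h : (p.1 + a) ^ 2 + (1 / 4) * (p.2 + b) ^ 2 ≤ x
    · exact Or.inl h
    · exact Or.inr ⟨lt_of_not_ge h, hp⟩
  have hfinx : μ (S x) ≠ ⊤ := measure_ne_top μ _
  have hfinD : μ D ≠ ⊤ := measure_ne_top μ _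
  rw [hP x, hP y, one_mul]
  have h1' : (μ (S y)).toReal ≤ (μ (S x)).toReal + (μ D).toReal := by
    rw [← ENNReal.toReal_add hfinx hfinD]
    exact ENNReal.toReal_mono (by simp [ENNReal.add_ne_top, hfinx, hfinD]) hsub
  have h2' : (μ D).toReal ≤ y - x := by
    have := ENNReal.toReal_mono ENNReal.ofReal_ne_top hDle
    rwa [ENNReal.toReal_ofReal (by linarith)] at this
  linarith
end
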